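/- Let p ≥ 2 be an integer and 0 < ♮ ≤ (p-1)^{p-1}/p^p. If a sequence (♦_k) of nonnegative reals satisfies ♦_1 ≤ 1 + ♮ and ♦_k ≤ 1 + ♮·(♦_{k-1})^p for k ≥ 2, then ♦_k ≤ p/(p-1) for all k ≥ 1. -/

import Mathlib

theorem stmt_3 (p : ℕ) (hp : 2 ≤ p) (nat : ℝ) (hn0 : 0 < nat)
    (hn1 : nat ≤ ((p : ℝ) - 1) ^ (p - 1) / (p : ℝ) ^ p)
    (d : ℕ → ℝ) (hnn : ∀ k, 0 ≤ d k)
    (h1 : d 1 ≤ 1 + nat)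
    (hrec : ∀ k, 2 ≤ k → d k ≤ 1 + nat * (d (k - 1)) ^ p) :
    ∀ k, 1 ≤ k → d k ≤ (p : ℝ) / ((p : ℝ) - 1) := by
  have hq : (2:ℝ) ≤ (p:ℝ) := by exact_mod_cast hp
  have hq1 : (0:ℝ) < (p:ℝ) - 1 := by linarith
  have hqp : (0:ℝ) < (p:ℝ) := by linarith
  have hB : (1:ℝ) ≤ (p:ℝ) / ((p:ℝ) - 1) := by
    rw [le_div_iff₀ hq1]; linarith
  have hpow1 : (1:ℝ) ≤ ((p:ℝ) / ((p:ℝ) - 1)) ^ p := one_le_pow₀ hB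
  -- key identity: ((p-1)^(p-1)/p^p) * (p/(p-1))^p = 1/(p-1)
  have hsucc : p - 1 + 1 = p := by omega
  have hkey : (((p:ℝ) - 1) ^ (p - 1) / (p : ℝ) ^ p) * ((p:ℝ) / ((p:ℝ) - 1)) ^ p
      = 1 / ((p:ℝ) - 1) := by
    rw [div_pow]
    have h1 : ((p:ℝ) - 1) ^ p = ((p:ℝ) - 1) ^ (p - 1) * ((p:ℝ) - 1) := by
      rw [← pow_succ, hsucc]
    rw [h1]
    field_simp
  have hstep : 1 + nat * ((p:ℝ) / ((p:ℝ) - 1)) ^ p ≤ (p:ℝ) / ((p:ℝ) - 1) := by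
    have : nat * ((p:ℝ) / ((p:ℝ) - 1)) ^ p ≤ 1 / ((p:ℝ) - 1) := by
      rw [← hkey]
      exact mul_le_mul_of_nonneg_right hn1 (by positivity)
    have h2 : 1 + 1 / ((p:ℝ) - 1) = (p:ℝ) / ((p:ℝ) - 1) := by field_simp; ring
    linarith
  intro k hk
  induction k, hk using Nat.le_induction with
  | base =>
      have : nat ≤ nat * ((p:ℝ) / ((p:ℝ) - 1)) ^ p := le_mul_of_one_le_right hn0.le hpow1
      linarith
  | succ n hn ih =>
      have h3 := hrec (n + 1) (by omega)
      simp only [Nat.add_sub_cancel] at h3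
      have h4 : d n ^ p ≤ ((p:ℝ) / ((p:ℝ) - 1)) ^ p := pow_le_pow_left₀ (hnn n) ih p
      have h5 : nat * d n ^ p ≤ nat * ((p:ℝ) / ((p:ℝ) - 1)) ^ p :=
        mul_le_mul_of_nonneg_left h4 hn0.le
      linarith
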